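/- For any effect signature E and any type X, the map ψ : E*(X_⊥) → sets of coplays, defined recursively by ψ (var ⊥) = ∅, ψ (var (some x)) = {ret x}, and ψ (node m t) = {op m} ∪ {m·n·s | n : ar m, s ∈ ψ (t n)}, takes every term to a costrategy and is an order embedding: for all terms t, t' ∈ E*(X_⊥), t ⊑ t' if and only if ψ(t) ⊆ ψ(t'). -/
import Mathlib


universe u v w

/-- Coplays over an effect signature `(E, ar)` with results in `X`. -/
inductive Coplay (E : Type u) (ar : E → Type v) (X : Type w) : Type (max u v w)
  | ret : X → Coplay E ar X
  | op : E → Coplay E ar X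
  | cons : (m : E) → ar m → Coplay E ar X → Coplay E ar X

/-- The prefix relation `⊑` on coplays. -/
inductive Coplay.Prefix {E : Type u} {ar : E → Type v} {X : Type w} :
    Coplay E ar X → Coplay E ar X → Prop
  | ret (x : X) : Coplay.Prefix (.ret x) (.ret x)
  | op (m : E) : Coplay.Prefix (.op m) (.op m)
  | op_cons (m : E) (n : ar m) (t : Coplay E ar X) :
      Coplay.Prefix (.op m) (.cons m n t)
  | cons (m : E) (n : ar m) {s t : Coplay E ar X} :
      Coplay.Prefix s t → Coplay.Prefix (.cons m n s) (.cons m n t)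

/-- The coherence relation `☡` on coplays. -/
inductive Coplay.Coh {E : Type u} {ar : E → Type v} {X : Type w} :
    Coplay E ar X → Coplay E ar X → Prop
  | ret (x : X) : Coplay.Coh (.ret x) (.ret x)
  | op (m : E) : Coplay.Coh (.op m) (.op m)
  | op_cons (m : E) (n : ar m) (s : Coplay E ar X) :
      Coplay.Coh (.op m) (.cons m n s)
  | cons (m : E) (n₁ n₂ : ar m) (s₁ s₂ : Coplay E ar X) :
      (n₁ = n₂ → Coplay.Coh s₁ s₂) → Coplay.Coh (.cons m n₁ s₁) (.cons m n₂ s₂)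

/-- A costrategy: a set of coplays, downward closed under the prefix relation
and pairwise coherent. -/
def IsCostrategy {E : Type u} {ar : E → Type v} {X : Type w}
    (σ : Set (Coplay E ar X)) : Prop :=
  (∀ s t : Coplay E ar X, Coplay.Prefix s t → t ∈ σ → s ∈ σ) ∧
  (∀ s ∈ σ, ∀ t ∈ σ, Coplay.Coh s t ∨ Coplay.Coh t s)

/-- Finite terms over the effect signature `(E, ar)` with variables in `V`. -/
inductive Term (E : Type u) (ar : E → Type v) (V : Type w) : Type (max u v w)
  | var : V → Term E ar V
  | node : (m : E) → (ar m → Term E ar V) → Term E ar V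

/-- The partial order `⊑` on partial terms in `E*(X_⊥)`. -/
inductive Term.Le {E : Type u} {ar : E → Type v} {X : Type w} :
    Term E ar (Option X) → Term E ar (Option X) → Prop
  | bot (t : Term E ar (Option X)) : Term.Le (.var none) t
  | var (x : X) : Term.Le (.var (some x)) (.var (some x))
  | node (m : E) {t t' : ar m → Term E ar (Option X)} :
      (∀ n, Term.Le (t n) (t' n)) → Term.Le (.node m t) (.node m t')

/-- The interpretation `ψ : E*(X_⊥) → S̄_E(X)` of partial terms as sets of coplays. -/
def psi {E : Type u} {ar : E → Type v} {X : Type w} :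
    Term E ar (Option X) → Set (Coplay E ar X)
  | .var none => ∅
  | .var (some x) => {Coplay.ret x}
  | .node m t =>
      {Coplay.op m} ∪
        {s | ∃ (n : ar m) (u : Coplay E ar X), u ∈ psi (t n) ∧ s = Coplay.cons m n u}


section Aux
variable {E : Type u} {ar : E → Type v} {X : Type w}

lemma psi_isCostrategy : ∀ t : Term E ar (Option X), IsCostrategy (psi t) := by
  intro t
  induction t with
  | var v =>
    cases v with
    | none => exact ⟨fun s t h ht => ht.elim, fun s hs => hs.elim⟩
    | some x =>
      refine ⟨fun s t h ht => ?_, fun s hs t ht => ?_⟩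
      · simp only [psi, Set.mem_singleton_iff] at ht; subst ht
        cases h; rfl
      · simp only [psi, Set.mem_singleton_iff] at hs ht; subst hs; subst ht
        exact Or.inl (Coplay.Coh.ret x)
  | node m f ih =>
    constructor
    · rintro s t h (ht | ⟨n, u, hu, rfl⟩)
      · simp only [Set.mem_singleton_iff] at ht; subst ht
        cases h; exact Or.inl rfl
      · cases h with
        | op_cons => exact Or.inl rfl
        | cons _ _ hpre =>
          exact Or.inr ⟨n, _, (ih n).1 _ _ hpre hu, rfl⟩
    · rintro s (hs | ⟨n₁, u₁, hu₁, rfl⟩) t (ht | ⟨n₂, u₂, hu₂, rfl⟩)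
      · simp only [Set.mem_singleton_iff] at hs ht; subst hs; subst ht
        exact Or.inl (Coplay.Coh.op m)
      · simp only [Set.mem_singleton_iff] at hs; subst hs
        exact Or.inl (Coplay.Coh.op_cons m n₂ u₂)
      · simp only [Set.mem_singleton_iff] at ht; subst ht
        exact Or.inr (Coplay.Coh.op_cons m n₁ u₁)
      · by_cases hn : n₁ = n₂
        · subst hn
          rcases (ih n₁).2 _ hu₁ _ hu₂ with h | h
          · exact Or.inl (Coplay.Coh.cons m n₁ n₁ _ _ fun _ => h)
          · exact Or.inr (Coplay.Coh.cons m n₁ n₁ _ _ fun _ => h)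
        · exact Or.inl (Coplay.Coh.cons m n₁ n₂ _ _ fun h => absurd h hn)

lemma psi_mono {t t' : Term E ar (Option X)} (h : Term.Le t t') :
    psi t ⊆ psi t' := by
  induction h with
  | bot t => exact fun s hs => hs.elim
  | var x => exact le_refl _
  | node m _ ih =>
    rintro s (hs | ⟨n, u, hu, rfl⟩)
    · exact Or.inl hs
    · exact Or.inr ⟨n, u, ih n hu, rfl⟩

lemma psi_reflect : ∀ t t' : Term E ar (Option X),
    psi t ⊆ psi t' → Term.Le t t' := by
  intro t
  induction t with
  | var v =>
    cases v with
    | none => exact fun t' _ => Term.Le.bot t'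
    | some x =>
      intro t' h
      have hx : Coplay.ret x ∈ psi t' := h rfl
      cases t' with
      | var v' =>
        cases v' with
        | none => exact hx.elim
        | some y =>
          simp only [psi, Set.mem_singleton_iff] at hx
          cases hx
          exact Term.Le.var x
      | node m g =>
        rcases hx with hx | ⟨n, u, _, hx⟩ <;> simp at hx
  | node m f ih =>
    intro t' h
    have hm : Coplay.op m ∈ psi t' := h (Or.inl rfl)
    cases t' with
    | var v' =>
      cases v' with
      | none => exact hm.elim
      | some y => simp only [psi, Set.mem_singleton_iff] at hm; cases hm
    | node m' g =>
      rcases hm with hm | ⟨n, u, _, hu⟩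
      · simp only [Set.mem_singleton_iff] at hm
        cases hm
        refine Term.Le.node m fun n => ih n _ fun u hu => ?_
        have : Coplay.cons m n u ∈ psi (Term.node m g) := h (Or.inr ⟨n, u, hu, rfl⟩)
        rcases this with h' | ⟨n', u', hu', he⟩
        · simp at h'
        · cases he; exact hu'
      · simp at hu

end Aux

/-- `ψ` takes every term to a costrategy and is an order embedding. -/
theorem psi_orderEmbedding (E : Type u) (ar : E → Type v) (X : Type w) :
    (∀ t : Term E ar (Option X), IsCostrategy (psi t)) ∧
    (∀ t t' : Term E ar (Option X), Term.Le t t' ↔ psi t ⊆ psi t') := by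
  exact ⟨psi_isCostrategy, fun t t' => ⟨psi_mono, psi_reflect t t'⟩⟩
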